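/- Under the noise assumption that for all integers k ≥ 2, E[|ξ_i|^k | X_i] ≤ (k!/2) σ² L^{k−2}, and boundedness ‖ψ*‖_∞ ≤ C and ‖ψ‖_∞ ≤ C with C > max(1, σ), the variables T_i = −(Y_i − ψ(X_i))² + (Y_i − ψ*(X_i))² satisfy ∑_{i=1}^n E[T_i²] ≤ 8n(σ² + C²)(R(ψ) − R(ψ*)). -/

import Mathlib

open MeasureTheory ProbabilityTheory Real

section Aux

/-- Core per-observation estimates. -/
lemma aux_one_step {Ω E : Type*} [mΩ : MeasurableSpace Ω] [MeasurableSpace E]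
    (μ : Measure Ω) [IsProbabilityMeasure μ]
    (X : Ω → E) (Y : Ω → ℝ) (ψstar ψ : E → ℝ)
    (hX : Measurable X) (hY : Measurable Y)
    (hψstar : Measurable ψstar) (hψ : Measurable ψ)
    (σ C : ℝ) (hσ : 0 < σ) (hC0 : 0 ≤ C)
    (hcenter : μ[(fun ω => Y ω - ψstar (X ω)) | MeasurableSpace.comap X inferInstance]
        =ᵐ[μ] fun _ => (0 : ℝ))
    (hmom2 : ∀ᵐ ω ∂μ,
      (μ[(fun ω' => |Y ω' - ψstar (X ω')| ^ 2) | MeasurableSpace.comap X inferInstance]) ω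
        ≤ σ ^ 2)
    (hψstar_bdd : ∀ x, |ψstar x| ≤ C) (hψ_bdd : ∀ x, |ψ x| ≤ C)
    (hY_sq : Integrable (fun ω => (Y ω) ^ 2) μ)
    (hT_sq : Integrable
      (fun ω => (-(Y ω - ψ (X ω)) ^ 2 + (Y ω - ψstar (X ω)) ^ 2) ^ 2) μ) :
    (∫ ω, (-(Y ω - ψ (X ω)) ^ 2 + (Y ω - ψstar (X ω)) ^ 2) ^ 2 ∂μ
      ≤ 8 * (σ ^ 2 + C ^ 2) * ∫ ω, (ψ (X ω) - ψstar (X ω)) ^ 2 ∂μ) ∧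
    ((∫ ω, (Y ω - ψ (X ω)) ^ 2 ∂μ) - (∫ ω, (Y ω - ψstar (X ω)) ^ 2 ∂μ)
      = ∫ ω, (ψ (X ω) - ψstar (X ω)) ^ 2 ∂μ) := by
  set m : MeasurableSpace Ω := MeasurableSpace.comap X inferInstance with hm_def
  have hm : m ≤ mΩ := hX.comap_le
  set ξ : Ω → ℝ := fun ω => Y ω - ψstar (X ω) with hξ_def
  set f : Ω → ℝ := fun ω => ψ (X ω) - ψstar (X ω) with hf_def
  -- measurability of f wrt m
  have hXm : Measurable[m] X := fun s hs => ⟨s, hs, rfl⟩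
  have hfm : StronglyMeasurable[m] f :=
    ((hψ.sub hψstar).comp hXm).stronglyMeasurable
  have hf2m : StronglyMeasurable[m] (fun ω => f ω ^ 2) := hfm.pow 2
  -- bounds on f
  have hf_bdd : ∀ ω, |f ω| ≤ 2 * C := by
    intro ω
    calc |f ω| ≤ |ψ (X ω)| + |ψstar (X ω)| := abs_sub _ _
    _ ≤ C + C := add_le_add (hψ_bdd _) (hψstar_bdd _)
    _ = 2 * C := by ring
  have hf2_bdd : ∀ ω, f ω ^ 2 ≤ 4 * C ^ 2 := by
    intro ω
    have := hf_bdd ω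
    nlinarith [abs_nonneg (f ω), sq_abs (f ω)]
  -- integrability facts
  have hYL2 : MemLp Y 2 μ :=
    (memLp_two_iff_integrable_sq hY.aestronglyMeasurable).2 hY_sq
  have hψstarX_L2 : MemLp (fun ω => ψstar (X ω)) 2 μ :=
    (memLp_top_of_bound (hψstar.comp hX).aestronglyMeasurable C
      (ae_of_all _ fun ω => by simpa using hψstar_bdd (X ω))).mono_exponent le_top
  have hξL2 : MemLp ξ 2 μ := hYL2.sub hψstarX_L2
  have hξ2int : Integrable (fun ω => ξ ω ^ 2) μ :=
    (memLp_two_iff_integrable_sq hξL2.aestronglyMeasurable).1 hξL2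
  have hξint : Integrable ξ μ := hξL2.integrable one_le_two
  have hfaesm : AEStronglyMeasurable[mΩ] f μ :=
    ((hψ.comp hX).sub (hψstar.comp hX)).aestronglyMeasurable
  have hf2aesm : AEStronglyMeasurable[mΩ] (fun ω => f ω ^ 2) μ := hfaesm.pow 2
  have hf2int : Integrable (fun ω => f ω ^ 2) μ :=
    ((memLp_top_of_bound hf2aesm (4 * C ^ 2)
      (ae_of_all _ fun ω => by
        rw [Real.norm_eq_abs, abs_of_nonneg (sq_nonneg _)]; exact hf2_bdd ω)).mono_exponent
        le_top).integrable le_rfl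
  have hf2ξ2int : Integrable (fun ω => f ω ^ 2 * ξ ω ^ 2) μ :=
    hξ2int.bdd_mul hf2aesm (c := 4 * C ^ 2) (ae_of_all _ fun ω => by
      rw [Real.norm_eq_abs, abs_of_nonneg (sq_nonneg _)]; exact hf2_bdd ω)
  have hfξint : Integrable (fun ω => f ω * ξ ω) μ :=
    hξint.bdd_mul hfaesm (c := 2 * C) (ae_of_all _ fun ω => hf_bdd ω)
  -- conditional second moment bound
  have hcond2 : ∀ᵐ ω ∂μ, (μ[(fun ω' => ξ ω' ^ 2) | m]) ω ≤ σ ^ 2 := by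
    have : (fun ω' => ξ ω' ^ 2) = fun ω' => |Y ω' - ψstar (X ω')| ^ 2 := by
      funext ω'; rw [sq_abs]
    rw [this]
    exact hmom2
  -- ∫ f² ξ² ≤ σ² ∫ f²
  have key_cond : ∫ ω, f ω ^ 2 * ξ ω ^ 2 ∂μ ≤ σ ^ 2 * ∫ ω, f ω ^ 2 ∂μ := by
    have hmul : μ[(fun ω => f ω ^ 2) * (fun ω => ξ ω ^ 2) | m]
        =ᵐ[μ] (fun ω => f ω ^ 2) * μ[(fun ω => ξ ω ^ 2) | m] :=
      condExp_mul_of_stronglyMeasurable_left hf2m (by exact hf2ξ2int) hξ2int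
    have h1 : ∫ ω, f ω ^ 2 * ξ ω ^ 2 ∂μ
        = ∫ ω, f ω ^ 2 * (μ[(fun ω' => ξ ω' ^ 2) | m]) ω ∂μ :=
      calc ∫ ω, f ω ^ 2 * ξ ω ^ 2 ∂μ
          = ∫ ω, ((fun ω => f ω ^ 2) * fun ω => ξ ω ^ 2) ω ∂μ := rfl
      _ = ∫ ω, (μ[(fun ω => f ω ^ 2) * (fun ω => ξ ω ^ 2) | m]) ω ∂μ :=
          (integral_condExp hm).symm
      _ = ∫ ω, ((fun ω => f ω ^ 2) * μ[(fun ω => ξ ω ^ 2) | m]) ω ∂μ :=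
          integral_congr_ae hmul
      _ = ∫ ω, f ω ^ 2 * (μ[(fun ω' => ξ ω' ^ 2) | m]) ω ∂μ := rfl
    rw [h1]
    have hcondint : Integrable (fun ω => f ω ^ 2 * (μ[(fun ω' => ξ ω' ^ 2) | m]) ω) μ :=
      integrable_condExp.bdd_mul hf2aesm (c := 4 * C ^ 2) (ae_of_all _ fun ω => by
        rw [Real.norm_eq_abs, abs_of_nonneg (sq_nonneg _)]; exact hf2_bdd ω)
    calc ∫ ω, f ω ^ 2 * (μ[(fun ω' => ξ ω' ^ 2) | m]) ω ∂μ
        ≤ ∫ ω, σ ^ 2 * f ω ^ 2 ∂μ := by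
          refine integral_mono_ae hcondint (hf2int.const_mul _) ?_
          filter_upwards [hcond2] with ω hω
          calc f ω ^ 2 * (μ[(fun ω' => ξ ω' ^ 2) | m]) ω
              ≤ f ω ^ 2 * σ ^ 2 := mul_le_mul_of_nonneg_left hω (sq_nonneg _)
          _ = σ ^ 2 * f ω ^ 2 := by ring
    _ = σ ^ 2 * ∫ ω, f ω ^ 2 ∂μ := integral_const_mul _ _
  -- ∫ f ξ = 0
  have key_cross : ∫ ω, f ω * ξ ω ∂μ = 0 := by
    have hmul : μ[f * ξ | m] =ᵐ[μ] f * μ[ξ | m] :=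
      condExp_mul_of_stronglyMeasurable_left hfm (by exact hfξint) hξint
    have h1 : ∫ ω, f ω * ξ ω ∂μ = ∫ ω, f ω * (μ[ξ | m]) ω ∂μ :=
      calc ∫ ω, f ω * ξ ω ∂μ = ∫ ω, (f * ξ) ω ∂μ := rfl
      _ = ∫ ω, (μ[f * ξ | m]) ω ∂μ := (integral_condExp hm).symm
      _ = ∫ ω, (f * μ[ξ | m]) ω ∂μ := integral_congr_ae hmul
      _ = ∫ ω, f ω * (μ[ξ | m]) ω ∂μ := rfl
    rw [h1]
    have h2 : (fun ω => f ω * (μ[ξ | m]) ω) =ᵐ[μ] fun _ => (0 : ℝ) := by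
      filter_upwards [hcenter] with ω hω
      simp [hω]
    rw [integral_congr_ae h2, integral_zero]
  constructor
  · -- first claim
    have hTle : ∀ ω, (-(Y ω - ψ (X ω)) ^ 2 + (Y ω - ψstar (X ω)) ^ 2) ^ 2
        ≤ 8 * (f ω ^ 2 * ξ ω ^ 2) + (8 * C ^ 2) * f ω ^ 2 := by
      intro ω
      have hTeq : -(Y ω - ψ (X ω)) ^ 2 + (Y ω - ψstar (X ω)) ^ 2
          = f ω * (2 * ξ ω - f ω) := by
        simp only [hξ_def, hf_def]; ring
      rw [hTeq]
      have h1 : f ω ^ 2 ≤ 4 * C ^ 2 := hf2_bdd ω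
      nlinarith [sq_nonneg (2 * ξ ω + f ω), sq_nonneg (f ω), sq_nonneg (ξ ω),
        sq_nonneg (f ω * (2 * ξ ω + f ω)), mul_nonneg (sq_nonneg (ξ ω)) (sq_nonneg (f ω))]
    calc ∫ ω, (-(Y ω - ψ (X ω)) ^ 2 + (Y ω - ψstar (X ω)) ^ 2) ^ 2 ∂μ
        ≤ ∫ ω, 8 * (f ω ^ 2 * ξ ω ^ 2) + (8 * C ^ 2) * f ω ^ 2 ∂μ :=
          integral_mono hT_sq ((hf2ξ2int.const_mul 8).add (hf2int.const_mul (8 * C ^ 2))) hTle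
    _ = 8 * ∫ ω, f ω ^ 2 * ξ ω ^ 2 ∂μ + (8 * C ^ 2) * ∫ ω, f ω ^ 2 ∂μ := by
          rw [integral_add (hf2ξ2int.const_mul 8) (hf2int.const_mul (8 * C ^ 2)),
            integral_const_mul, integral_const_mul]
    _ ≤ 8 * (σ ^ 2 * ∫ ω, f ω ^ 2 ∂μ) + (8 * C ^ 2) * ∫ ω, f ω ^ 2 ∂μ := by
          have := key_cond; linarith
    _ = 8 * (σ ^ 2 + C ^ 2) * ∫ ω, f ω ^ 2 ∂μ := by ring
  · -- second claim
    have hsplit : ∀ ω, (Y ω - ψ (X ω)) ^ 2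
        = ξ ω ^ 2 - 2 * (f ω * ξ ω) + f ω ^ 2 := by
      intro ω; simp only [hξ_def, hf_def]; ring
    have h1 : ∫ ω, (Y ω - ψ (X ω)) ^ 2 ∂μ
        = ∫ ω, ξ ω ^ 2 - 2 * (f ω * ξ ω) + f ω ^ 2 ∂μ := by
      exact integral_congr_ae (ae_of_all _ hsplit)
    have h2 : ∫ ω, ξ ω ^ 2 - 2 * (f ω * ξ ω) + f ω ^ 2 ∂μ
        = (∫ ω, ξ ω ^ 2 ∂μ) - 2 * (∫ ω, f ω * ξ ω ∂μ) + ∫ ω, f ω ^ 2 ∂μ := by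
      have hint1 : Integrable (fun ω => ξ ω ^ 2 - 2 * (f ω * ξ ω)) μ :=
        hξ2int.sub (hfξint.const_mul 2)
      rw [integral_add hint1 hf2int,
        integral_sub hξ2int (hfξint.const_mul 2), integral_const_mul]
    have h3 : ∫ ω, (Y ω - ψstar (X ω)) ^ 2 ∂μ = ∫ ω, ξ ω ^ 2 ∂μ := rfl
    rw [h1, h2, h3, key_cross]
    ring

end Aux

/-- Variance-type bound: under conditional Bernstein moments on the noise and
sup-norm bounds on `ψ` and `ψ*`, the variables
`T_i = −(Y_i − ψ(X_i))² + (Y_i − ψ*(X_i))²` satisfy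
`∑ E[T_i²] ≤ 8 n (σ² + C²) (R(ψ) − R(ψ*))`. -/
theorem sum_sq_Ti_le
    {Ω E : Type*} [MeasurableSpace Ω] [MeasurableSpace E]
    (μ : Measure Ω) [IsProbabilityMeasure μ]
    (n : ℕ) (hn : 0 < n)
    (X : Fin n → Ω → E) (Y : Fin n → Ω → ℝ) (ψstar ψ : E → ℝ)
    (hX : ∀ i, Measurable (X i)) (hY : ∀ i, Measurable (Y i))
    (hψstar : Measurable ψstar) (hψ : Measurable ψ)
    (hident : ∀ i, IdentDistrib (fun ω => (X i ω, Y i ω))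
      (fun ω => (X ⟨0, hn⟩ ω, Y ⟨0, hn⟩ ω)) μ μ)
    (σ L C : ℝ) (hσ : 0 < σ) (hL : 0 < L) (hC : max 1 σ < C)
    (hcenter : ∀ i,
      μ[(fun ω => Y i ω - ψstar (X i ω)) | MeasurableSpace.comap (X i) inferInstance]
        =ᵐ[μ] fun _ => (0 : ℝ))
    (hmom : ∀ i, ∀ k : ℕ, 2 ≤ k →
      ∀ᵐ ω ∂μ,
        (μ[(fun ω' => |Y i ω' - ψstar (X i ω')| ^ k) |
            MeasurableSpace.comap (X i) inferInstance]) ω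
          ≤ (k.factorial : ℝ) / 2 * σ ^ 2 * L ^ (k - 2))
    (hψstar_bdd : ∀ x, |ψstar x| ≤ C) (hψ_bdd : ∀ x, |ψ x| ≤ C)
    (hY_sq : ∀ i, Integrable (fun ω => (Y i ω) ^ 2) μ)
    (hT_sq : ∀ i, Integrable
      (fun ω => (-(Y i ω - ψ (X i ω)) ^ 2 + (Y i ω - ψstar (X i ω)) ^ 2) ^ 2) μ) :
    ∑ i : Fin n,
        ∫ ω, (-(Y i ω - ψ (X i ω)) ^ 2 + (Y i ω - ψstar (X i ω)) ^ 2) ^ 2 ∂μ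
      ≤ 8 * n * (σ ^ 2 + C ^ 2) *
          ((∫ ω, (Y ⟨0, hn⟩ ω - ψ (X ⟨0, hn⟩ ω)) ^ 2 ∂μ) -
            ∫ ω, (Y ⟨0, hn⟩ ω - ψstar (X ⟨0, hn⟩ ω)) ^ 2 ∂μ) := by
  have hC0 : (0 : ℝ) ≤ C := le_trans (by norm_num) (le_of_lt (lt_of_le_of_lt (le_max_left 1 σ) hC))
  have hmom2 : ∀ i, ∀ᵐ ω ∂μ,
      (μ[(fun ω' => |Y i ω' - ψstar (X i ω')| ^ 2) |
          MeasurableSpace.comap (X i) inferInstance]) ω ≤ σ ^ 2 := by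
    intro i
    filter_upwards [hmom i 2 le_rfl] with ω hω
    calc _ ≤ ((2 : ℕ).factorial : ℝ) / 2 * σ ^ 2 * L ^ (2 - 2) := hω
    _ = σ ^ 2 := by norm_num [Nat.factorial]
  have haux := fun i => aux_one_step μ (X i) (Y i) ψstar ψ (hX i) (hY i) hψstar hψ σ C hσ hC0
    (hcenter i) (hmom2 i) hψstar_bdd hψ_bdd (hY_sq i) (hT_sq i)
  -- identical distribution: ∫ f_i² = ∫ f₀²
  have hident_f : ∀ i, ∫ ω, (ψ (X i ω) - ψstar (X i ω)) ^ 2 ∂μ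
      = ∫ ω, (ψ (X ⟨0, hn⟩ ω) - ψstar (X ⟨0, hn⟩ ω)) ^ 2 ∂μ := by
    intro i
    have hu : Measurable (fun p : E × ℝ => (ψ p.1 - ψstar p.1) ^ 2) :=
      ((hψ.comp measurable_fst).sub (hψstar.comp measurable_fst)).pow_const 2
    exact ((hident i).comp hu).integral_eq
  have hB0 : (∫ ω, (Y ⟨0, hn⟩ ω - ψ (X ⟨0, hn⟩ ω)) ^ 2 ∂μ) -
      (∫ ω, (Y ⟨0, hn⟩ ω - ψstar (X ⟨0, hn⟩ ω)) ^ 2 ∂μ)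
      = ∫ ω, (ψ (X ⟨0, hn⟩ ω) - ψstar (X ⟨0, hn⟩ ω)) ^ 2 ∂μ := (haux ⟨0, hn⟩).2
  calc ∑ i : Fin n,
        ∫ ω, (-(Y i ω - ψ (X i ω)) ^ 2 + (Y i ω - ψstar (X i ω)) ^ 2) ^ 2 ∂μ
      ≤ ∑ i : Fin n, 8 * (σ ^ 2 + C ^ 2) *
          ∫ ω, (ψ (X ⟨0, hn⟩ ω) - ψstar (X ⟨0, hn⟩ ω)) ^ 2 ∂μ := by
        refine Finset.sum_le_sum fun i _ => ?_
        calc _ ≤ 8 * (σ ^ 2 + C ^ 2) * ∫ ω, (ψ (X i ω) - ψstar (X i ω)) ^ 2 ∂μ := (haux i).1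
        _ = _ := by rw [hident_f i]
  _ = 8 * n * (σ ^ 2 + C ^ 2) *
        ∫ ω, (ψ (X ⟨0, hn⟩ ω) - ψstar (X ⟨0, hn⟩ ω)) ^ 2 ∂μ := by
        rw [Finset.sum_const, Finset.card_univ, Fintype.card_fin, nsmul_eq_mul]
        ring
  _ = _ := by rw [hB0]
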